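/- Let R satisfy R^T k ≠ 0 for all nonzero k ∈ ℤ^m, 1 < p < ∞. Suppose u_η two-scale cut-and-projection converges weakly to u₀, the limit u₀ belongs to L^p(Ω; C_♯(Y^m)), and ‖u_η‖_{L^p(Ω)} → ‖u₀‖_{L^p(Ω×Y^m)} as well as ‖u₀(·, R·/η)‖_{L^p(Ω)} → ‖u₀‖_{L^p(Ω×Y^m)}. Then ‖u_η − u₀(·, R·/η)‖_{L^p(Ω)} → 0 as η → 0. -/

import Mathlib

open MeasureTheory Filter Topology Matrix

noncomputable section

/-- The open unit cube `Y^m = (0,1)^m`. -/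
def cube (m : ℕ) : Set (Fin m → ℝ) := Set.univ.pi fun _ => Set.Ioo (0:ℝ) 1

/-- `Y^m`-periodicity: invariance under integer translations. -/
def Zper {m : ℕ} {α : Type*} (g : (Fin m → ℝ) → α) : Prop :=
  ∀ (k : Fin m → ℤ) (y : Fin m → ℝ), g (y + fun i => (k i : ℝ)) = g y

/-- Cut-and-projection irrationality condition: `Rᵀ k ≠ 0` for nonzero integer `k`. -/
def Irr {m n : ℕ} (R : Matrix (Fin m) (Fin n) ℝ) : Prop :=
  ∀ k : Fin m → ℤ, k ≠ 0 → R.transpose.mulVec (fun i => (k i : ℝ)) ≠ 0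

/-- Admissible test functions: `φ ∈ L^q(Ω; C_♯(Y^m))`. -/
def TestFun {n m : ℕ} (q : ℝ) (Ω : Set (Fin n → ℝ))
    (φ : (Fin n → ℝ) → (Fin m → ℝ) → ℝ) : Prop :=
  (∀ x, Continuous (φ x)) ∧ (∀ x, Zper (φ x)) ∧
  (∀ y, AEMeasurable (fun x => φ x y) (volume.restrict Ω)) ∧
  Integrable (fun x => (⨆ y, |φ x y|) ^ q) (volume.restrict Ω)

/-- Weak two-scale cut-and-projection convergence along a sequence of scales `η`. -/
def WeakTwoScale {n m : ℕ} (q : ℝ) (Ω : Set (Fin n → ℝ)) (R : Matrix (Fin m) (Fin n) ℝ)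
    (η : ℕ → ℝ) (u : ℕ → (Fin n → ℝ) → ℝ)
    (u₀ : (Fin n → ℝ) → (Fin m → ℝ) → ℝ) : Prop :=
  ∀ φ : (Fin n → ℝ) → (Fin m → ℝ) → ℝ, TestFun q Ω φ →
    Tendsto (fun k => ∫ x in Ω, u k x * φ x ((η k)⁻¹ • R.mulVec x)) atTop
      (𝓝 (∫ x in Ω, ∫ y in cube m, u₀ x y * φ x y))

/-- Classical gradient on `ℝ^m`. -/
def gradY {m : ℕ} (θ : (Fin m → ℝ) → ℝ) (y : Fin m → ℝ) : Fin m → ℝ :=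
  fun j => fderiv ℝ θ y (Pi.single j 1)

/-- The projected gradient `grad_R θ = Rᵀ ∇_y θ`. -/
def gradR {m n : ℕ} (R : Matrix (Fin m) (Fin n) ℝ) (θ : (Fin m → ℝ) → ℝ)
    (y : Fin m → ℝ) : Fin n → ℝ :=
  R.transpose.mulVec (gradY θ y)

/-- The projected divergence `div_R φ = (Rᵀ ∇_y) · φ`. -/
def divR {m n : ℕ} (R : Matrix (Fin m) (Fin n) ℝ) (φ : (Fin m → ℝ) → Fin n → ℝ)
    (y : Fin m → ℝ) : ℝ :=
  ∑ i, gradR R (fun z => φ z i) y i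

/-- `G` is the weak periodic cut-and-projection gradient `grad_R θ`. -/
def IsWeakGradR {m n : ℕ} (R : Matrix (Fin m) (Fin n) ℝ) (θ : (Fin m → ℝ) → ℝ)
    (G : (Fin m → ℝ) → Fin n → ℝ) : Prop :=
  ∀ ψ : (Fin m → ℝ) → Fin n → ℝ, ContDiff ℝ (⊤ : ℕ∞) ψ → (∀ i, Zper fun y => ψ y i) →
    ∫ y in cube m, θ y * divR R ψ y = - ∫ y in cube m, G y ⬝ᵥ ψ y

/-- `d` is the weak periodic cut-and-projection divergence `div_R φ`. -/
def IsWeakDivR {m n : ℕ} (R : Matrix (Fin m) (Fin n) ℝ) (φ : (Fin m → ℝ) → Fin n → ℝ)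
    (d : (Fin m → ℝ) → ℝ) : Prop :=
  ∀ ψ : (Fin m → ℝ) → ℝ, ContDiff ℝ (⊤ : ℕ∞) ψ → Zper ψ →
    ∫ y in cube m, φ y ⬝ᵥ gradR R ψ y = - ∫ y in cube m, d y * ψ y

/-- `G` is the weak (full) periodic gradient `∇_y θ`. -/
def IsWeakGrad {m : ℕ} (θ : (Fin m → ℝ) → ℝ) (G : (Fin m → ℝ) → Fin m → ℝ) : Prop :=
  ∀ ψ : (Fin m → ℝ) → ℝ, ContDiff ℝ (⊤ : ℕ∞) ψ → Zper ψ → ∀ j,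
    ∫ y in cube m, θ y * gradY ψ y j = - ∫ y in cube m, G y j * ψ y

/-- `G` is the weak gradient of `u` on `Ω`. -/
def IsWeakGradOn {n : ℕ} (Ω : Set (Fin n → ℝ)) (u : (Fin n → ℝ) → ℝ)
    (G : (Fin n → ℝ) → Fin n → ℝ) : Prop :=
  ∀ ψ : (Fin n → ℝ) → ℝ, ContDiff ℝ (⊤ : ℕ∞) ψ → HasCompactSupport ψ → tsupport ψ ⊆ Ω → ∀ j,
    ∫ x in Ω, u x * fderiv ℝ ψ x (Pi.single j 1) = - ∫ x in Ω, G x j * ψ x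

/-- `d` is the weak divergence of `v` on `Ω`. -/
def IsWeakDivOn {n : ℕ} (Ω : Set (Fin n → ℝ)) (v : (Fin n → ℝ) → Fin n → ℝ)
    (d : (Fin n → ℝ) → ℝ) : Prop :=
  ∀ ψ : (Fin n → ℝ) → ℝ, ContDiff ℝ (⊤ : ℕ∞) ψ → HasCompactSupport ψ → tsupport ψ ⊆ Ω →
    ∫ x in Ω, v x ⬝ᵥ (fun j => fderiv ℝ ψ x (Pi.single j 1)) = - ∫ x in Ω, d x * ψ x

/-- Membership in `W_0^{1,p}(Ω)` with weak gradient `G`. -/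
def MemW1p0 {n : ℕ} (p : ℝ) (Ω : Set (Fin n → ℝ)) (u : (Fin n → ℝ) → ℝ)
    (G : (Fin n → ℝ) → Fin n → ℝ) : Prop :=
  Integrable (fun x => |u x| ^ p) (volume.restrict Ω) ∧
  Integrable (fun x => ‖G x‖ ^ p) (volume.restrict Ω) ∧
  IsWeakGradOn Ω u G ∧
  ∃ v : ℕ → (Fin n → ℝ) → ℝ,
    (∀ j, ContDiff ℝ (⊤ : ℕ∞) (v j) ∧ HasCompactSupport (v j) ∧ tsupport (v j) ⊆ Ω) ∧
    Tendsto (fun j => (∫ x in Ω, |v j x - u x| ^ p) +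
      ∫ x in Ω, ‖(fun i => fderiv ℝ (v j) x (Pi.single i 1)) - G x‖ ^ p) atTop (𝓝 0)

namespace Stmt6Aux

/-- Signed power `t ↦ sign(t)·|t|^r`, written in a form that is easy to analyze. -/
def sp (r t : ℝ) : ℝ := (max t 0) ^ r - (max (-t) 0) ^ r

lemma sp_of_nonneg {r t : ℝ} (hr : r ≠ 0) (ht : 0 ≤ t) : sp r t = t ^ r := by
  unfold sp
  rw [max_eq_left ht, max_eq_right (neg_nonpos.2 ht), Real.zero_rpow hr, sub_zero]

lemma sp_neg (r t : ℝ) : sp r (-t) = - sp r t := by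
  unfold sp; rw [neg_neg]; ring

lemma sp_of_nonpos {r t : ℝ} (hr : r ≠ 0) (ht : t ≤ 0) : sp r t = -((-t) ^ r) := by
  have h := sp_of_nonneg hr (neg_nonneg.2 ht) (t := -t)
  calc sp r t = sp r (-(-t)) := by rw [neg_neg]
    _ = - sp r (-t) := sp_neg r (-t)
    _ = -((-t) ^ r) := by rw [h]

lemma sp_abs {r : ℝ} (hr : r ≠ 0) (t : ℝ) : |sp r t| = |t| ^ r := by
  rcases le_total 0 t with ht | ht
  · rw [sp_of_nonneg hr ht, abs_of_nonneg ht, abs_of_nonneg (Real.rpow_nonneg ht r)]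
  · rw [sp_of_nonpos hr ht, abs_of_nonpos ht, abs_neg,
      abs_of_nonneg (Real.rpow_nonneg (neg_nonneg.2 ht) r)]

lemma sp_mul_self {r : ℝ} (hr : 0 < r) (t : ℝ) : sp r t * t = |t| ^ (r + 1) := by
  have hr1 : r + 1 ≠ 0 := by positivity
  have key : ∀ s : ℝ, 0 ≤ s → sp r s * s = |s| ^ (r + 1) := by
    intro s hs
    rcases eq_or_lt_of_le hs with h | h
    · rw [← h, abs_zero, Real.zero_rpow hr1, mul_zero]
    · rw [sp_of_nonneg hr.ne' hs, abs_of_nonneg hs, Real.rpow_add_one h.ne' r]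
  rcases le_total 0 t with ht | ht
  · exact key t ht
  · have := key (-t) (neg_nonneg.2 ht)
    rw [sp_neg, abs_neg] at this
    rw [← this]; ring

lemma sp_cont {r : ℝ} (hr : 0 < r) : Continuous (sp r) := by
  apply Continuous.sub
  · exact continuous_iff_continuousAt.2 fun t =>
      ((continuous_id.max continuous_const).continuousAt).rpow_const (Or.inr hr.le)
  · exact continuous_iff_continuousAt.2 fun t =>
      ((continuous_neg.max continuous_const).continuousAt).rpow_const (Or.inr hr.le)

lemma contF {p : ℝ} (hp : 0 ≤ p) : Continuous fun t : ℝ => |t| ^ p :=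
  continuous_iff_continuousAt.2 fun t =>
    (continuous_abs.continuousAt).rpow_const (Or.inr hp)

/-- Tangent-line (Young) inequality for `|·|^p`. -/
lemma tangent {p : ℝ} (hp : 1 < p) (a b : ℝ) :
    p * (sp (p - 1) b * a) ≤ |a| ^ p + (p - 1) * |b| ^ p := by
  have hp0 : (0:ℝ) < p := lt_trans one_pos hp
  have hcj : p.HolderConjugate (p / (p - 1)) := Real.HolderConjugate.conjExponent hp
  have h1 : sp (p - 1) b * a ≤ |a| * |b| ^ (p - 1) := by
    calc sp (p - 1) b * a ≤ |sp (p - 1) b * a| := le_abs_self _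
      _ = |a| * |b| ^ (p - 1) := by
          rw [abs_mul, sp_abs (by linarith : p - 1 ≠ 0), mul_comm]
  have hy : |a| * |b| ^ (p - 1) ≤ |a| ^ p / p + (|b| ^ (p - 1)) ^ (p / (p - 1)) / (p / (p - 1)) :=
    Real.young_inequality_of_nonneg (abs_nonneg a) (Real.rpow_nonneg (abs_nonneg b) _) hcj
  have hpm1 : p - 1 ≠ 0 := by linarith
  have hb1 : (|b| ^ (p - 1)) ^ (p / (p - 1)) = |b| ^ p := by
    rw [← Real.rpow_mul (abs_nonneg b)]
    congr 1
    field_simp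
  rw [hb1] at hy
  have hq : p / (p / (p - 1)) = p - 1 := by field_simp
  calc p * (sp (p - 1) b * a) ≤ p * (|a| * |b| ^ (p - 1)) :=
        mul_le_mul_of_nonneg_left h1 hp0.le
    _ ≤ p * (|a| ^ p / p + |b| ^ p / (p / (p - 1))) := mul_le_mul_of_nonneg_left hy hp0.le
    _ = |a| ^ p + (p / (p / (p - 1))) * |b| ^ p := by field_simp
    _ = |a| ^ p + (p - 1) * |b| ^ p := by rw [hq]


/-- Bregman divergence of `|·|^p`. -/
def Dfun (p a b : ℝ) : ℝ := |a| ^ p + (p - 1) * |b| ^ p - p * (sp (p - 1) b * a)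

lemma Dfun_nonneg {p : ℝ} (hp : 1 < p) (a b : ℝ) : 0 ≤ Dfun p a b :=
  sub_nonneg.2 (tangent hp a b)

lemma Dfun_cont {p : ℝ} (hp : 1 < p) : Continuous fun z : ℝ × ℝ => Dfun p z.1 z.2 := by
  have h1 : (0:ℝ) ≤ p := by linarith
  exact (((contF h1).comp continuous_fst).add
      (continuous_const.mul ((contF h1).comp continuous_snd))).sub
    (continuous_const.mul (((sp_cont (by linarith : (0:ℝ) < p - 1)).comp continuous_snd).mul
        continuous_fst))

lemma convexOn_abs_rpow {p : ℝ} (hp : 1 ≤ p) : ConvexOn ℝ Set.univ fun t : ℝ => |t| ^ p := by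
  refine ⟨convex_univ, fun x _ y _ a b ha hb hab => ?_⟩
  have h1 : |a • x + b • y| ≤ a * |x| + b * |y| := by
    calc |a • x + b • y| ≤ |a • x| + |b • y| := abs_add_le _ _
      _ = a * |x| + b * |y| := by
          rw [smul_eq_mul, smul_eq_mul, abs_mul, abs_mul, abs_of_nonneg ha, abs_of_nonneg hb]
  calc |a • x + b • y| ^ p ≤ (a * |x| + b * |y|) ^ p :=
        Real.rpow_le_rpow (abs_nonneg _) h1 (by linarith)
    _ = (a • |x| + b • |y|) ^ p := by rw [smul_eq_mul, smul_eq_mul]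
    _ ≤ a • |x| ^ p + b • |y| ^ p :=
        (convexOn_rpow hp).2 (Set.mem_Ici.2 (abs_nonneg x)) (Set.mem_Ici.2 (abs_nonneg y)) ha hb hab
    _ = a * |x| ^ p + b * |y| ^ p := by rw [smul_eq_mul, smul_eq_mul]

lemma strictConvexOn_abs_rpow {p : ℝ} (hp : 1 < p) :
    StrictConvexOn ℝ Set.univ fun t : ℝ => |t| ^ p := by
  refine ⟨convex_univ, fun x _ y _ hxy a b ha hb hab => ?_⟩
  have hp0 : (0:ℝ) < p := by linarith
  rcases eq_or_ne |x| |y| with habs | habs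
  · -- then y = -x and x ≠ 0
    have hyx : y = -x := by
      rcases abs_eq_abs.1 habs with h | h
      · exact absurd h hxy
      · linarith [h]
    have hx0 : x ≠ 0 := by
      intro h0; apply hxy; rw [h0, hyx, h0, neg_zero]
    have hxpos : 0 < |x| := abs_pos.2 hx0
    have h1 : |a • x + b • y| < |x| := by
      rw [hyx, smul_eq_mul, smul_eq_mul, mul_neg, ← sub_eq_add_neg, ← sub_mul, abs_mul]
      have : |a - b| < 1 := by
        rw [abs_lt]; constructor <;> linarith
      calc |a - b| * |x| < 1 * |x| := by
            exact mul_lt_mul_of_pos_right this hxpos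
        _ = |x| := one_mul _
    calc |a • x + b • y| ^ p < |x| ^ p :=
          Real.rpow_lt_rpow (abs_nonneg _) h1 hp0
      _ = a * |x| ^ p + b * |y| ^ p := by rw [← habs]; rw [← add_mul, hab, one_mul]
      _ = a • |x| ^ p + b • |y| ^ p := by rw [smul_eq_mul, smul_eq_mul]
  · have h1 : |a • x + b • y| ≤ a * |x| + b * |y| := by
      calc |a • x + b • y| ≤ |a • x| + |b • y| := abs_add_le _ _
        _ = a * |x| + b * |y| := by
            rw [smul_eq_mul, smul_eq_mul, abs_mul, abs_mul, abs_of_nonneg ha.le,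
              abs_of_nonneg hb.le]
    calc |a • x + b • y| ^ p ≤ (a * |x| + b * |y|) ^ p :=
          Real.rpow_le_rpow (abs_nonneg _) h1 hp0.le
      _ = (a • |x| + b • |y|) ^ p := by rw [smul_eq_mul, smul_eq_mul]
      _ < a • |x| ^ p + b • |y| ^ p :=
          (strictConvexOn_rpow hp).2 (Set.mem_Ici.2 (abs_nonneg x))
            (Set.mem_Ici.2 (abs_nonneg y)) habs ha hb hab
      _ = a * |x| ^ p + b * |y| ^ p := by rw [smul_eq_mul, smul_eq_mul]

lemma Dfun_pos {p : ℝ} (hp : 1 < p) {a b : ℝ} (hab : a ≠ b) : 0 < Dfun p a b := by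
  by_contra hle
  push_neg at hle
  have hD : Dfun p a b = 0 := le_antisymm hle (Dfun_nonneg hp a b)
  have hsm := (strictConvexOn_abs_rpow hp).2 (Set.mem_univ a) (Set.mem_univ b) hab
    (by norm_num : (0:ℝ) < 1/2) (by norm_num : (0:ℝ) < 1/2) (by norm_num)
  rw [smul_eq_mul, smul_eq_mul, smul_eq_mul, smul_eq_mul] at hsm
  have hmid := tangent hp ((1/2) * a + (1/2) * b) b
  have hbb : sp (p - 1) b * b = |b| ^ p := by
    have := sp_mul_self (by linarith : (0:ℝ) < p - 1) b
    rwa [sub_add_cancel] at this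
  have hDle : |a| ^ p + (p - 1) * |b| ^ p = p * (sp (p - 1) b * a) := by
    have : Dfun p a b = 0 := hD
    unfold Dfun at this; linarith
  have hexp : p * (sp (p - 1) b * ((1/2) * a + (1/2) * b))
      = (1/2) * (p * (sp (p - 1) b * a)) + (1/2) * p * |b| ^ p := by
    rw [mul_add]
    rw [show sp (p-1) b * ((1/2) * b) = (1/2) * (sp (p-1) b * b) by ring, hbb]
    ring
  -- tangent at midpoint gives f(mid) ≥ (f a + f b)/2, contradicting strict convexity
  rw [hexp, ← hDle] at hmid
  nlinarith [hmid, hsm]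


lemma split {p : ℝ} (hp : 1 ≤ p) {θ : ℝ} (h0 : 0 < θ) (h1 : θ < 1) (x y : ℝ) :
    |x + y| ^ p ≤ (1-θ) ^ (1-p) * |x| ^ p + θ ^ (1-p) * |y| ^ p := by
  have h1θ : 0 < 1 - θ := by linarith
  have hc := (convexOn_abs_rpow hp).2 (Set.mem_univ (x/(1-θ))) (Set.mem_univ (y/θ))
    h1θ.le h0.le (by ring)
  rw [smul_eq_mul, smul_eq_mul, smul_eq_mul, smul_eq_mul,
    mul_div_cancel₀ _ h1θ.ne', mul_div_cancel₀ _ h0.ne'] at hc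
  have e1 : (1-θ) * |x/(1-θ)| ^ p = (1-θ) ^ (1-p) * |x| ^ p := by
    rw [abs_div, abs_of_pos h1θ, Real.div_rpow (abs_nonneg x) h1θ.le,
      Real.rpow_sub h1θ, Real.rpow_one]
    ring
  have e2 : θ * |y/θ| ^ p = θ ^ (1-p) * |y| ^ p := by
    rw [abs_div, abs_of_pos h0, Real.div_rpow (abs_nonneg y) h0.le,
      Real.rpow_sub h0, Real.rpow_one]
    ring
  rw [e1, e2] at hc
  exact hc

lemma sub_rpow_le {p : ℝ} (hp : 1 ≤ p) (a b : ℝ) :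
    |a - b| ^ p ≤ 2 ^ (p-1) * |a| ^ p + 2 ^ (p-1) * |b| ^ p := by
  have h := split hp (by norm_num : (0:ℝ) < 1/2) (by norm_num : (1:ℝ)/2 < 1) a (-b)
  have e : ((1:ℝ)/2) ^ (1-p) = 2 ^ (p-1) := by
    rw [show (1:ℝ)/2 = (2:ℝ)^(-1:ℝ) by rw [Real.rpow_neg_one]; norm_num, ← Real.rpow_mul (by norm_num)]
    norm_num
  have e' : ((1:ℝ) - 1/2) = 1/2 := by norm_num
  rw [e', e, abs_neg] at h
  calc |a - b| ^ p = |a + -b| ^ p := by rw [sub_eq_add_neg]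
    _ ≤ 2 ^ (p-1) * |a| ^ p + 2 ^ (p-1) * |b| ^ p := h


/-- A uniform bound `||a+b|^p - |a|^p| ≤ |a|^p/2 + C |b|^p`. -/
lemma splitBound {p : ℝ} (hp : 1 < p) :
    ∃ C : ℝ, 0 ≤ C ∧ ∀ a b : ℝ, |(|a + b| ^ p - |a| ^ p)| ≤ (1/2) * |a| ^ p + C * |b| ^ p := by
  have hp1 : 0 < p - 1 := by linarith
  set θ : ℝ := 1 - (8/9 : ℝ) ^ (p-1)⁻¹ with hθdef
  have h89 : (0:ℝ) < 8/9 := by norm_num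
  have hrp : (0:ℝ) < (8/9 : ℝ) ^ (p-1)⁻¹ := Real.rpow_pos_of_pos h89 _
  have hrl : (8/9 : ℝ) ^ (p-1)⁻¹ < 1 :=
    Real.rpow_lt_one h89.le (by norm_num) (inv_pos.2 hp1)
  have hθ0 : 0 < θ := by simp only [hθdef]; linarith
  have hθ1 : θ < 1 := by simp only [hθdef]; linarith
  have hs : (1-θ) ^ (1-p) = 9/8 := by
    have h1θ : (1:ℝ) - θ = (8/9 : ℝ) ^ (p-1)⁻¹ := by simp only [hθdef]; ring
    rw [h1θ, ← Real.rpow_mul h89.le]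
    have : (p-1)⁻¹ * (1-p) = -1 := by
      field_simp
      ring
    rw [this, Real.rpow_neg_one]
    norm_num
  set C₀ : ℝ := θ ^ (1-p) with hC₀def
  have hC₀ : 0 ≤ C₀ := Real.rpow_nonneg hθ0.le _
  refine ⟨2 * C₀ + 1, by linarith, fun a b => ?_⟩
  have hB1 : ∀ x y : ℝ, |x + y| ^ p ≤ (9/8) * |x| ^ p + C₀ * |y| ^ p := by
    intro x y
    have := split hp.le hθ0 hθ1 x y
    rwa [hs] at this
  have hb0 : (0:ℝ) ≤ |b| ^ p := Real.rpow_nonneg (abs_nonneg _) _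
  have ha0 : (0:ℝ) ≤ |a| ^ p := Real.rpow_nonneg (abs_nonneg _) _
  have hab0 : (0:ℝ) ≤ |a + b| ^ p := Real.rpow_nonneg (abs_nonneg _) _
  rw [abs_sub_le_iff]
  constructor
  · have := hB1 a b
    nlinarith
  · have h2 : |a| ^ p ≤ (9/8) * |a + b| ^ p + C₀ * |b| ^ p := by
      have := hB1 (a + b) (-b)
      rw [abs_neg] at this
      simpa using this
    have h3 := hB1 a b
    nlinarith

/-- Coercivity: a bound on `Dfun` and `|b|` bounds `|a|`. -/
lemma Dfun_coercive {p : ℝ} (hp : 1 < p) {B : ℝ} (hB : 0 ≤ B) :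
    ∃ M : ℝ, ∀ a b : ℝ, |b| ≤ B → Dfun p a b ≤ 1 → |a| ≤ M := by
  have hp0 : (0:ℝ) < p := by linarith
  have hp1 : (0:ℝ) < p - 1 := by linarith
  set C₂ : ℝ := p * B ^ (p-1) with hC₂def
  have hC₂ : 0 ≤ C₂ := mul_nonneg hp0.le (Real.rpow_nonneg hB _)
  refine ⟨max 1 (max ((2:ℝ) ^ p⁻¹) ((2*C₂) ^ (p-1)⁻¹)), fun a b hb hD => ?_⟩
  by_contra hM
  push_neg at hM
  have hx1 : 1 < |a| := lt_of_le_of_lt (le_max_left _ _) hM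
  have hx0 : 0 < |a| := by linarith
  -- basic inequality from Dfun ≤ 1
  have hkey : |a| ^ p ≤ 1 + C₂ * |a| := by
    have h1 : p * (sp (p-1) b * a) ≤ p * (|b| ^ (p-1) * |a|) := by
      apply mul_le_mul_of_nonneg_left _ hp0.le
      calc sp (p-1) b * a ≤ |sp (p-1) b * a| := le_abs_self _
        _ = |b| ^ (p-1) * |a| := by rw [abs_mul, sp_abs hp1.ne']
    have h2 : |b| ^ (p-1) ≤ B ^ (p-1) := Real.rpow_le_rpow (abs_nonneg _) hb hp1.le
    have h3 : (0:ℝ) ≤ (p-1) * |b| ^ p := by positivity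
    have h4 : p * (|b| ^ (p-1) * |a|) ≤ C₂ * |a| := by
      rw [hC₂def]
      have := mul_le_mul_of_nonneg_right h2 (abs_nonneg a)
      nlinarith
    unfold Dfun at hD
    nlinarith
  have h2lt : 2 < |a| ^ p := by
    have ha : (2:ℝ) ^ p⁻¹ < |a| := lt_of_le_of_lt (le_trans (le_max_left _ _) (le_max_right _ _)) hM
    have := Real.rpow_lt_rpow (Real.rpow_nonneg (by norm_num) _) ha hp0
    rwa [← Real.rpow_mul (by norm_num : (0:ℝ) ≤ 2), inv_mul_cancel₀ hp0.ne', Real.rpow_one] at this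
  have hClt : 2 * C₂ < |a| ^ (p-1) := by
    have ha : (2*C₂) ^ (p-1)⁻¹ < |a| :=
      lt_of_le_of_lt (le_trans (le_max_right _ _) (le_max_right _ _)) hM
    have := Real.rpow_lt_rpow (Real.rpow_nonneg (by linarith) _) ha hp1
    rwa [← Real.rpow_mul (by linarith : (0:ℝ) ≤ 2*C₂), inv_mul_cancel₀ hp1.ne',
      Real.rpow_one] at this
  have hxx : |a| ^ (p-1) * |a| = |a| ^ p := by
    rw [← Real.rpow_add_one hx0.ne' (p-1)]
    ring_nf
  have : C₂ * |a| < |a| ^ p / 2 := by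
    have := mul_lt_mul_of_pos_right hClt hx0
    rw [hxx] at this
    linarith
  linarith

/-- From a.e. convergence of the Bregman divergence to `0` with bounded second argument,
deduce convergence of the difference. -/
lemma tendsto_sub_of_Dfun {p : ℝ} (hp : 1 < p) {B : ℝ} (hB : 0 ≤ B) (a b : ℕ → ℝ)
    (hb : ∀ j, |b j| ≤ B)
    (hD : Tendsto (fun j => Dfun p (a j) (b j)) atTop (𝓝 0)) :
    Tendsto (fun j => a j - b j) atTop (𝓝 0) := by
  obtain ⟨M, hM⟩ := Dfun_coercive hp hB
  rw [Metric.tendsto_atTop]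
  intro ε hε
  set K : Set (ℝ × ℝ) := {z | |z.1| ≤ M ∧ |z.2| ≤ B ∧ ε ≤ |z.1 - z.2|} with hKdef
  have hKc : IsClosed K := by
    apply IsClosed.inter (isClosed_le (continuous_fst.abs) continuous_const)
    exact IsClosed.inter (isClosed_le (continuous_snd.abs) continuous_const)
      (isClosed_le continuous_const ((continuous_fst.sub continuous_snd).abs))
  have hKcp : IsCompact K := by
    apply (isCompact_Icc (a := ((-M, -B) : ℝ × ℝ)) (b := (M, B))).of_isClosed_subset hKc
    rintro ⟨z1, z2⟩ ⟨h1, h2, _⟩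
    rw [Set.mem_Icc]
    rcases abs_le.1 h1 with ⟨h1a, h1b⟩
    rcases abs_le.1 h2 with ⟨h2a, h2b⟩
    exact ⟨⟨h1a, h2a⟩, ⟨h1b, h2b⟩⟩
  rcases K.eq_empty_or_nonempty with hKe | hKne
  · have hev := hD.eventually_lt_const one_pos
    rw [eventually_atTop] at hev
    obtain ⟨N, hN⟩ := hev
    refine ⟨N, fun j hj => ?_⟩
    rw [Real.dist_eq, sub_zero]
    by_contra hc
    push_neg at hc
    have : (a j, b j) ∈ K := ⟨hM _ _ (hb j) (hN j hj).le, hb j, hc⟩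
    rw [hKe] at this
    exact this
  · obtain ⟨w, hwK, hwmin'⟩ := hKcp.exists_isMinOn hKne (Dfun_cont hp).continuousOn
    have hwmin : ∀ z ∈ K, Dfun p w.1 w.2 ≤ Dfun p z.1 z.2 := fun z hz => hwmin' hz
    have hw12 : w.1 ≠ w.2 := by
      intro h
      rcases hwK with ⟨-, -, hwe⟩
      rw [h, sub_self, abs_zero] at hwe
      linarith
    have hε₀ : 0 < Dfun p w.1 w.2 := Dfun_pos hp hw12
    have hev := hD.eventually_lt_const (lt_min hε₀ one_pos)
    rw [eventually_atTop] at hev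
    obtain ⟨N, hN⟩ := hev
    refine ⟨N, fun j hj => ?_⟩
    rw [Real.dist_eq, sub_zero]
    by_contra hc
    push_neg at hc
    have hmem : (a j, b j) ∈ K :=
      ⟨hM _ _ (hb j) (le_of_lt (lt_of_lt_of_le (hN j hj) (min_le_right _ _))), hb j, hc⟩
    have := hwmin _ hmem
    have h2 := lt_of_lt_of_le (hN j hj) (min_le_left _ _)
    simp only at this h2
    linarith


lemma tendsto_abs_rpow_sub {p : ℝ} (hp : 0 < p) {c : ℝ} (g v : ℕ → ℝ)
    (hg : ∀ j, |g j| ≤ c) (hv : Tendsto v atTop (𝓝 0)) :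
    Tendsto (fun j => |g j + v j| ^ p - |g j| ^ p) atTop (𝓝 0) := by
  rw [Metric.tendsto_atTop]
  intro ε hε
  set s : Set ℝ := Set.Icc (-(c+1)) (c+1) with hsdef
  have hcs : IsCompact s := isCompact_Icc
  have : CompactSpace s := isCompact_iff_compactSpace.mp hcs
  have hufc : UniformContinuous fun t : s => |t.1| ^ p :=
    CompactSpace.uniformContinuous_of_continuous ((contF hp.le).comp continuous_subtype_val)
  obtain ⟨δ, hδ, hδ'⟩ := Metric.uniformContinuous_iff.mp hufc ε hε
  have hvev : ∀ᶠ j in atTop, |v j| < min δ 1 := by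
    have := Metric.tendsto_atTop.mp hv (min δ 1) (lt_min hδ one_pos)
    rw [eventually_atTop]
    obtain ⟨N, hN⟩ := this
    exact ⟨N, fun j hj => by have := hN j hj; rwa [Real.dist_eq, sub_zero] at this⟩
  rw [eventually_atTop] at hvev
  obtain ⟨N, hN⟩ := hvev
  refine ⟨N, fun j hj => ?_⟩
  have hvj := hN j hj
  have hc0 : 0 ≤ c := le_trans (abs_nonneg _) (hg 0)
  have hm1 : g j ∈ s := by
    rw [hsdef, Set.mem_Icc]
    rcases abs_le.1 (hg j) with ⟨h1, h2⟩
    constructor <;> linarith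
  have hm2 : g j + v j ∈ s := by
    rw [hsdef, Set.mem_Icc]
    rcases abs_le.1 (hg j) with ⟨h1, h2⟩
    rcases abs_le.1 (le_of_lt (lt_of_lt_of_le hvj (min_le_right _ _))) with ⟨h3, h4⟩
    constructor <;> linarith
  have hdist : dist (⟨g j + v j, hm2⟩ : s) (⟨g j, hm1⟩ : s) < δ := by
    rw [Subtype.dist_eq]
    simp only [Real.dist_eq, add_sub_cancel_left]
    exact lt_of_lt_of_le hvj (min_le_left _ _)
  have := hδ' hdist
  rw [Real.dist_eq, sub_zero]
  simpa [Real.dist_eq] using this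

/-- Brezis–Lieb type lemma. -/
lemma BL {α : Type*} [MeasurableSpace α] {μ : Measure α} {p : ℝ} (hp : 1 < p) {N : ℝ}
    (Φ : α → ℝ) (hΦ0 : ∀ x, 0 ≤ Φ x) (hΦint : Integrable (fun x => Φ x ^ p) μ)
    (F G : ℕ → α → ℝ) (hFmeas : ∀ j, AEMeasurable (F j) μ) (hGmeas : ∀ j, AEMeasurable (G j) μ)
    (hFint : ∀ j, Integrable (fun x => |F j x| ^ p) μ)
    (hGb : ∀ j x, |G j x| ≤ Φ x)
    (hae : ∀ᵐ x ∂μ, Tendsto (fun j => F j x - G j x) atTop (𝓝 0))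
    (hF : Tendsto (fun j => ∫ x, |F j x| ^ p ∂μ) atTop (𝓝 N))
    (hG : Tendsto (fun j => ∫ x, |G j x| ^ p ∂μ) atTop (𝓝 N)) :
    Tendsto (fun j => ∫ x, |F j x - G j x| ^ p ∂μ) atTop (𝓝 0) := by
  have hp0 : (0:ℝ) < p := by linarith
  obtain ⟨C, hC0, hC⟩ := splitBound hp
  -- measurability
  have mV : ∀ j, AEMeasurable (fun x => F j x - G j x) μ := fun j => (hFmeas j).sub (hGmeas j)
  have mVp : ∀ j, AEMeasurable (fun x => |F j x - G j x| ^ p) μ := fun j =>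
    (contF hp0.le).measurable.comp_aemeasurable (mV j)
  have mFp : ∀ j, AEMeasurable (fun x => |F j x| ^ p) μ := fun j =>
    (contF hp0.le).measurable.comp_aemeasurable (hFmeas j)
  have mGp : ∀ j, AEMeasurable (fun x => |G j x| ^ p) μ := fun j =>
    (contF hp0.le).measurable.comp_aemeasurable (hGmeas j)
  have mW : ∀ j, AEMeasurable (fun x => |(|F j x| ^ p - |F j x - G j x| ^ p - |G j x| ^ p)|) μ :=
    fun j => continuous_abs.measurable.comp_aemeasurable (((mFp j).sub (mVp j)).sub (mGp j))
  have mZ : ∀ j, AEMeasurable (fun x =>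
      max (|(|F j x| ^ p - |F j x - G j x| ^ p - |G j x| ^ p)| - (1/2) * |F j x - G j x| ^ p) 0) μ :=
    fun j => ((mW j).sub ((mVp j).const_mul (1/2))).max aemeasurable_const
  -- pointwise bounds
  have hGpb : ∀ j x, |G j x| ^ p ≤ Φ x ^ p := fun j x =>
    Real.rpow_le_rpow (abs_nonneg _) (hGb j x) hp0.le
  have hWb : ∀ j x, |(|F j x| ^ p - |F j x - G j x| ^ p - |G j x| ^ p)|
      ≤ (1/2) * |F j x - G j x| ^ p + (C+1) * |G j x| ^ p := by
    intro j x
    have h1 : |(|F j x| ^ p - |F j x - G j x| ^ p)|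
        ≤ (1/2) * |F j x - G j x| ^ p + C * |G j x| ^ p := by
      have h := hC (F j x - G j x) (G j x)
      rwa [sub_add_cancel] at h
    have hG0 : (0:ℝ) ≤ |G j x| ^ p := Real.rpow_nonneg (abs_nonneg _) _
    calc |(|F j x| ^ p - |F j x - G j x| ^ p - |G j x| ^ p)|
        ≤ |(|F j x| ^ p - |F j x - G j x| ^ p)| + |(|G j x| ^ p)| := abs_sub _ _
      _ ≤ (1/2) * |F j x - G j x| ^ p + C * |G j x| ^ p + |G j x| ^ p := by
          rw [abs_of_nonneg hG0]; linarith
      _ = (1/2) * |F j x - G j x| ^ p + (C+1) * |G j x| ^ p := by ring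
  have hZb : ∀ j x, max (|(|F j x| ^ p - |F j x - G j x| ^ p - |G j x| ^ p)|
      - (1/2) * |F j x - G j x| ^ p) 0 ≤ (C+1) * (Φ x ^ p) := by
    intro j x
    apply max_le _ (mul_nonneg (by linarith) (Real.rpow_nonneg (hΦ0 x) _))
    have := hWb j x
    have h2 : (C+1) * |G j x| ^ p ≤ (C+1) * (Φ x ^ p) :=
      mul_le_mul_of_nonneg_left (hGpb j x) (by linarith)
    linarith
  -- integrability
  have intGp : ∀ j, Integrable (fun x => |G j x| ^ p) μ := by
    intro j
    apply hΦint.mono' (mGp j).aestronglyMeasurable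
    exact Eventually.of_forall fun x => by
      rw [Real.norm_eq_abs, abs_of_nonneg (Real.rpow_nonneg (abs_nonneg _) _)]
      exact hGpb j x
  have intVp : ∀ j, Integrable (fun x => |F j x - G j x| ^ p) μ := by
    intro j
    apply Integrable.mono' (((hFint j).const_mul (2^(p-1))).add (hΦint.const_mul (2^(p-1))))
      (mVp j).aestronglyMeasurable
    refine Eventually.of_forall fun x => ?_
    rw [Real.norm_eq_abs, abs_of_nonneg (Real.rpow_nonneg (abs_nonneg _) _)]
    calc |F j x - G j x| ^ p ≤ 2^(p-1) * |F j x| ^ p + 2^(p-1) * |G j x| ^ p :=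
          sub_rpow_le hp.le _ _
      _ ≤ 2^(p-1) * |F j x| ^ p + 2^(p-1) * (Φ x ^ p) := by
          have : (0:ℝ) ≤ (2:ℝ)^(p-1) := Real.rpow_nonneg (by norm_num) _
          nlinarith [hGpb j x]
  have intW : ∀ j, Integrable
      (fun x => |(|F j x| ^ p - |F j x - G j x| ^ p - |G j x| ^ p)|) μ :=
    fun j => (((hFint j).sub (intVp j)).sub (intGp j)).abs
  have intZ : ∀ j, Integrable (fun x =>
      max (|(|F j x| ^ p - |F j x - G j x| ^ p - |G j x| ^ p)|
        - (1/2) * |F j x - G j x| ^ p) 0) μ := by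
    intro j
    apply Integrable.mono' (hΦint.const_mul (C+1)) (mZ j).aestronglyMeasurable
    refine Eventually.of_forall fun x => ?_
    rw [Real.norm_eq_abs, abs_of_nonneg (le_max_right _ _)]
    exact hZb j x
  -- a.e. convergence of Z to 0
  have hZae : ∀ᵐ x ∂μ, Tendsto (fun j =>
      max (|(|F j x| ^ p - |F j x - G j x| ^ p - |G j x| ^ p)|
        - (1/2) * |F j x - G j x| ^ p) 0) atTop (𝓝 0) := by
    filter_upwards [hae] with x hx
    have hB : Tendsto (fun j => |F j x - G j x| ^ p) atTop (𝓝 0) := by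
      have := ((contF hp0.le).tendsto 0).comp hx
      simpa [abs_zero, Real.zero_rpow hp0.ne', Function.comp_def] using this
    have hA : Tendsto (fun j => |F j x| ^ p - |G j x| ^ p) atTop (𝓝 0) := by
      have := tendsto_abs_rpow_sub hp0 (fun j => G j x) (fun j => F j x - G j x)
        (fun j => hGb j x) hx
      have he : (fun j => |G j x + (F j x - G j x)| ^ p - |G j x| ^ p)
          = fun j => |F j x| ^ p - |G j x| ^ p := by
        funext j; rw [add_sub_cancel]
      rwa [he] at this
    have hW : Tendsto (fun j => |(|F j x| ^ p - |F j x - G j x| ^ p - |G j x| ^ p)|)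
        atTop (𝓝 0) := by
      have h1 : Tendsto (fun j => |F j x| ^ p - |F j x - G j x| ^ p - |G j x| ^ p)
          atTop (𝓝 0) := by
        have := hA.sub hB
        have he : (fun j => |F j x| ^ p - |G j x| ^ p - |F j x - G j x| ^ p)
            = fun j => |F j x| ^ p - |F j x - G j x| ^ p - |G j x| ^ p := by
          funext j; ring
        rw [he] at this
        simpa using this
      have := h1.abs
      simpa using this
    have hfin := Tendsto.max (hW.sub (hB.const_mul (1/2)))
      (tendsto_const_nhds (x := (0:ℝ)) (f := atTop))
    simpa using hfin
  -- dominated convergence for Z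
  have hZint : Tendsto (fun j => ∫ x,
      max (|(|F j x| ^ p - |F j x - G j x| ^ p - |G j x| ^ p)|
        - (1/2) * |F j x - G j x| ^ p) 0 ∂μ) atTop (𝓝 0) := by
    have := tendsto_integral_of_dominated_convergence (fun x => (C+1) * (Φ x ^ p))
      (fun j => (mZ j).aestronglyMeasurable) (hΦint.const_mul (C+1))
      (fun j => Eventually.of_forall fun x => by
        rw [Real.norm_eq_abs, abs_of_nonneg (le_max_right _ _)]
        exact hZb j x)
      hZae
    simpa using this
  -- main integral inequality and squeeze
  have hmain : ∀ j, ∫ x, |F j x - G j x| ^ p ∂μ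
      ≤ 2 * ((∫ x, |F j x| ^ p ∂μ - ∫ x, |G j x| ^ p ∂μ) + ∫ x,
        max (|(|F j x| ^ p - |F j x - G j x| ^ p - |G j x| ^ p)|
          - (1/2) * |F j x - G j x| ^ p) 0 ∂μ) := by
    intro j
    have hpt : ∀ x, |F j x - G j x| ^ p ≤ (|F j x| ^ p - |G j x| ^ p)
        + ((1/2) * |F j x - G j x| ^ p
          + max (|(|F j x| ^ p - |F j x - G j x| ^ p - |G j x| ^ p)|
            - (1/2) * |F j x - G j x| ^ p) 0) := by
      intro x
      have h1 : -(|F j x| ^ p - |F j x - G j x| ^ p - |G j x| ^ p)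
          ≤ |(|F j x| ^ p - |F j x - G j x| ^ p - |G j x| ^ p)| := neg_le_abs _
      have h2 : |(|F j x| ^ p - |F j x - G j x| ^ p - |G j x| ^ p)|
          - (1/2) * |F j x - G j x| ^ p
          ≤ max (|(|F j x| ^ p - |F j x - G j x| ^ p - |G j x| ^ p)|
            - (1/2) * |F j x - G j x| ^ p) 0 := le_max_left _ _
      linarith
    have hint : ∫ x, |F j x - G j x| ^ p ∂μ ≤ ∫ x, ((|F j x| ^ p - |G j x| ^ p)
        + ((1/2) * |F j x - G j x| ^ p
          + max (|(|F j x| ^ p - |F j x - G j x| ^ p - |G j x| ^ p)|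
            - (1/2) * |F j x - G j x| ^ p) 0)) ∂μ :=
      integral_mono (intVp j) (((hFint j).sub (intGp j)).add
        (((intVp j).const_mul (1/2)).add (intZ j))) hpt
    have i1 : Integrable (fun x => |F j x| ^ p - |G j x| ^ p) μ := (hFint j).sub (intGp j)
    have i2a : Integrable (fun x => (1/2) * |F j x - G j x| ^ p) μ := (intVp j).const_mul (1/2)
    have i2 : Integrable (fun x => (1/2) * |F j x - G j x| ^ p
        + max (|(|F j x| ^ p - |F j x - G j x| ^ p - |G j x| ^ p)|
          - (1/2) * |F j x - G j x| ^ p) 0) μ := i2a.add (intZ j)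
    rw [integral_add i1 i2, integral_sub (hFint j) (intGp j),
      integral_add i2a (intZ j), integral_const_mul] at hint
    linarith
  have hc : Tendsto (fun j => 2 * ((∫ x, |F j x| ^ p ∂μ - ∫ x, |G j x| ^ p ∂μ) + ∫ x,
      max (|(|F j x| ^ p - |F j x - G j x| ^ p - |G j x| ^ p)|
        - (1/2) * |F j x - G j x| ^ p) 0 ∂μ)) atTop (𝓝 0) := by
    have := ((hF.sub hG).add hZint).const_mul (2:ℝ)
    simpa using this
  exact squeeze_zero (fun j => integral_nonneg fun x => Real.rpow_nonneg (abs_nonneg _) _)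
    hmain hc

end Stmt6Aux

set_option maxHeartbeats 1000000 in
/-- corrector in `L^p`: if `u_η ⇀⇀ u₀` weakly, `u₀ ∈ L^p(Ω; C_♯(Y^m))`,
and both `‖u_η‖_{L^p(Ω)}` and `‖u₀(·, R·/η)‖_{L^p(Ω)}` converge to `‖u₀‖_{L^p(Ω×Y^m)}`,
then `‖u_η − u₀(·, R·/η)‖_{L^p(Ω)} → 0`. -/
theorem stmt6 {n m : ℕ} (p q : ℝ) (hp : 1 < p) (hpq : 1 / p + 1 / q = 1)
    (Ω : Set (Fin n → ℝ)) (hΩo : IsOpen Ω) (hΩb : Bornology.IsBounded Ω)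
    (R : Matrix (Fin m) (Fin n) ℝ) (hR : Irr R)
    (η : ℕ → ℝ) (hηpos : ∀ k, 0 < η k) (hη : Tendsto η atTop (𝓝 0))
    (u : ℕ → (Fin n → ℝ) → ℝ)
    (hu : ∀ k, AEMeasurable (u k) (volume.restrict Ω))
    (huLp : ∀ k, Integrable (fun x => |u k x| ^ p) (volume.restrict Ω))
    (u₀ : (Fin n → ℝ) → (Fin m → ℝ) → ℝ)
    (hu₀cont : ∀ x, Continuous (u₀ x)) (hu₀per : ∀ x, Zper (u₀ x))
    (hu₀meas : ∀ y, Measurable fun x => u₀ x y)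
    (hu₀Lp : Integrable (fun x => (⨆ y, |u₀ x y|) ^ p) (volume.restrict Ω))
    (h2s : WeakTwoScale q Ω R η u u₀)
    (hnorm : Tendsto (fun k => ∫ x in Ω, |u k x| ^ p) atTop
      (𝓝 (∫ x in Ω, ∫ y in cube m, |u₀ x y| ^ p)))
    (hnorm' : Tendsto (fun k => ∫ x in Ω, |u₀ x ((η k)⁻¹ • R.mulVec x)| ^ p) atTop
      (𝓝 (∫ x in Ω, ∫ y in cube m, |u₀ x y| ^ p))) :
    Tendsto (fun k => ∫ x in Ω, |u k x - u₀ x ((η k)⁻¹ • R.mulVec x)| ^ p) atTop (𝓝 0) := by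
  classical
  have hp0 : (0:ℝ) < p := by linarith
  have hp1 : (0:ℝ) < p - 1 := by linarith
  have hcj : p.HolderConjugate q := Real.holderConjugate_iff.mpr ⟨hp, by rw [← one_div, ← one_div]; exact hpq⟩
  set μ := volume.restrict Ω with hμ
  set Φ : (Fin n → ℝ) → ℝ := fun x => ⨆ y, |u₀ x y| with hΦdef
  -- the sup over y is attained on the closed unit cube
  have hsup : ∀ x, ∃ y₀, ∀ y, |u₀ x y| ≤ |u₀ x y₀| := by
    intro x
    obtain ⟨y₀, hy₀mem, hy₀K⟩ := (isCompact_Icc (a := (0 : Fin m → ℝ)) (b := 1)).exists_isMaxOn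
      ⟨0, Set.mem_Icc.2 ⟨le_refl _, zero_le_one⟩⟩ ((hu₀cont x).abs.continuousOn)
    have hy₀ : ∀ z ∈ Set.Icc (0 : Fin m → ℝ) 1, |u₀ x z| ≤ |u₀ x y₀| := fun z hz => hy₀K hz
    refine ⟨y₀, fun y => ?_⟩
    have hfr : (fun i => Int.fract (y i)) ∈ Set.Icc (0 : Fin m → ℝ) 1 := by
      rw [Set.mem_Icc]
      constructor <;> intro i
      · exact Int.fract_nonneg _
      · exact (Int.fract_lt_one _).le
    have hyz : u₀ x y = u₀ x (fun i => Int.fract (y i)) := by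
      have hper := hu₀per x (fun i => ⌊y i⌋) (fun i => Int.fract (y i))
      rw [← hper]
      congr 1
      funext i
      exact (Int.fract_add_floor (y i)).symm
    rw [hyz]
    exact hy₀ _ hfr
  have hbdd : ∀ x, BddAbove (Set.range fun y => |u₀ x y|) := by
    intro x
    obtain ⟨y₀, hy₀⟩ := hsup x
    exact ⟨|u₀ x y₀|, by rintro v ⟨y, rfl⟩; exact hy₀ y⟩
  have hΦle : ∀ x z, |u₀ x z| ≤ Φ x := fun x z => le_ciSup (hbdd x) z
  have hΦ0 : ∀ x, 0 ≤ Φ x := fun x => le_trans (abs_nonneg _) (hΦle x 0)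
  have hΦeq : ∀ x, ∃ y₀, Φ x = |u₀ x y₀| := by
    intro x
    obtain ⟨y₀, hy₀⟩ := hsup x
    exact ⟨y₀, le_antisymm (ciSup_le hy₀) (hΦle x y₀)⟩
  have hsupφ : ∀ x, (⨆ y, |Stmt6Aux.sp (p-1) (u₀ x y)|) = Φ x ^ (p-1) := by
    intro x
    obtain ⟨y₀, hy₀⟩ := hΦeq x
    have hub : ∀ y, |Stmt6Aux.sp (p-1) (u₀ x y)| ≤ Φ x ^ (p-1) := by
      intro y
      rw [Stmt6Aux.sp_abs hp1.ne']
      exact Real.rpow_le_rpow (abs_nonneg _) (hΦle x y) hp1.le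
    apply le_antisymm (ciSup_le hub)
    have hv : Φ x ^ (p-1) = |Stmt6Aux.sp (p-1) (u₀ x y₀)| := by
      rw [Stmt6Aux.sp_abs hp1.ne', hy₀]
    rw [hv]
    exact le_ciSup (⟨Φ x ^ (p-1), by rintro v ⟨y, rfl⟩; exact hub y⟩ :
      BddAbove (Set.range fun y => |Stmt6Aux.sp (p-1) (u₀ x y)|)) y₀
  -- the dual test function
  set φ : (Fin n → ℝ) → (Fin m → ℝ) → ℝ := fun x y => Stmt6Aux.sp (p-1) (u₀ x y) with hφdef
  have hTF : TestFun q Ω φ := by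
    refine ⟨fun x => (Stmt6Aux.sp_cont hp1).comp (hu₀cont x), fun x k y => ?_, fun y =>
      ((Stmt6Aux.sp_cont hp1).measurable.comp (hu₀meas y)).aemeasurable, ?_⟩
    · simp only [hφdef]
      rw [hu₀per x k y]
    · have he : (fun x => (⨆ y, |φ x y|) ^ q) = fun x => Φ x ^ p := by
        funext x
        simp only [hφdef]
        rw [hsupφ x, ← Real.rpow_mul (hΦ0 x), hcj.sub_one_mul_conj]
      rw [he]
      exact hu₀Lp
  have hT := h2s φ hTF
  have hRHS : (∫ x in Ω, ∫ y in cube m, u₀ x y * φ x y)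
      = ∫ x in Ω, ∫ y in cube m, |u₀ x y| ^ p := by
    refine integral_congr_ae (Eventually.of_forall fun x => ?_)
    refine integral_congr_ae (Eventually.of_forall fun y => ?_)
    simp only [hφdef]
    rw [mul_comm, Stmt6Aux.sp_mul_self hp1, sub_add_cancel]
  rw [hRHS] at hT
  -- measurability of the oscillating function
  have hgmeas : ∀ k, AEMeasurable (fun x => u₀ x ((η k)⁻¹ • R.mulVec x)) μ := by
    intro k
    have hunc : Measurable (Function.uncurry fun y x => u₀ x y) :=
      measurable_uncurry_of_continuous_of_measurable (fun x => hu₀cont x) hu₀meas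
    have hσ : Measurable fun x : Fin n → ℝ => (η k)⁻¹ • R.mulVec x := by
      apply Continuous.measurable
      apply Continuous.fun_const_smul
      apply continuous_pi
      intro i
      simp only [Matrix.mulVec, dotProduct]
      exact continuous_finset_sum _ fun j _ => continuous_const.mul (continuous_apply j)
    exact (hunc.comp (hσ.prodMk measurable_id)).aemeasurable
  have hgb : ∀ k x, |u₀ x ((η k)⁻¹ • R.mulVec x)| ≤ Φ x := fun k x => hΦle x _
  -- integrability facts
  have int_gp : ∀ k, Integrable (fun x => |u₀ x ((η k)⁻¹ • R.mulVec x)| ^ p) μ := by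
    intro k
    apply hu₀Lp.mono' ((Stmt6Aux.contF hp0.le).measurable.comp_aemeasurable
      (hgmeas k)).aestronglyMeasurable
    refine Eventually.of_forall fun x => ?_
    show ‖|u₀ x ((η k)⁻¹ • R.mulVec x)| ^ p‖ ≤ Φ x ^ p
    rw [Real.norm_eq_abs, abs_of_nonneg (Real.rpow_nonneg (abs_nonneg _) _)]
    exact Real.rpow_le_rpow (abs_nonneg _) (hgb k x) hp0.le
  have int_spu : ∀ k, Integrable (fun x =>
      Stmt6Aux.sp (p-1) (u₀ x ((η k)⁻¹ • R.mulVec x)) * u k x) μ := by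
    intro k
    have hm : AEMeasurable (fun x =>
        Stmt6Aux.sp (p-1) (u₀ x ((η k)⁻¹ • R.mulVec x)) * u k x) μ :=
      ((Stmt6Aux.sp_cont hp1).measurable.comp_aemeasurable (hgmeas k)).mul (hu k)
    apply Integrable.mono' ((hu₀Lp.div_const q).add ((huLp k).div_const p))
      hm.aestronglyMeasurable
    refine Eventually.of_forall fun x => ?_
    show ‖Stmt6Aux.sp (p-1) (u₀ x ((η k)⁻¹ • R.mulVec x)) * u k x‖
      ≤ (fun x => (⨆ y, |u₀ x y|) ^ p / q) x + (fun x => |u k x| ^ p / p) x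
    rw [Real.norm_eq_abs, abs_mul]
    rw [Stmt6Aux.sp_abs hp1.ne']
    show _ ≤ Φ x ^ p / q + |u k x| ^ p / p
    have h1 : |u₀ x ((η k)⁻¹ • R.mulVec x)| ^ (p-1) * |u k x| ≤ |u k x| * Φ x ^ (p-1) := by
      rw [mul_comm]
      exact mul_le_mul_of_nonneg_left
        (Real.rpow_le_rpow (abs_nonneg _) (hgb k x) hp1.le) (abs_nonneg _)
    have h2 : |u k x| * Φ x ^ (p-1) ≤ |u k x| ^ p / p + (Φ x ^ (p-1)) ^ q / q :=
      Real.young_inequality_of_nonneg (abs_nonneg _) (Real.rpow_nonneg (hΦ0 x) _) hcj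
    rw [← Real.rpow_mul (hΦ0 x), hcj.sub_one_mul_conj] at h2
    linarith
    -- the Bregman divergence sequence
  set D : ℕ → (Fin n → ℝ) → ℝ := fun k x =>
    Stmt6Aux.Dfun p (u k x) (u₀ x ((η k)⁻¹ • R.mulVec x)) with hDdef
  have hDexp : ∀ k, D k = fun x => (|u k x| ^ p
      + (p-1) * |u₀ x ((η k)⁻¹ • R.mulVec x)| ^ p)
      - p * (Stmt6Aux.sp (p-1) (u₀ x ((η k)⁻¹ • R.mulVec x)) * u k x) := by
    intro k
    funext x
    simp only [hDdef, Stmt6Aux.Dfun]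
  have int_D : ∀ k, Integrable (D k) μ := by
    intro k
    rw [hDexp k]
    exact ((huLp k).add ((int_gp k).const_mul (p-1))).sub ((int_spu k).const_mul p)
  have hiD : ∀ k, ∫ x, D k x ∂μ = ((∫ x, |u k x| ^ p ∂μ)
      + (p-1) * (∫ x, |u₀ x ((η k)⁻¹ • R.mulVec x)| ^ p ∂μ))
      - p * (∫ x, u k x * φ x ((η k)⁻¹ • R.mulVec x) ∂μ) := by
    intro k
    have i1 : Integrable (fun x => |u k x| ^ p
        + (p-1) * |u₀ x ((η k)⁻¹ • R.mulVec x)| ^ p) μ :=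
      (huLp k).add ((int_gp k).const_mul (p-1))
    have i1a : Integrable (fun x => (p-1) * |u₀ x ((η k)⁻¹ • R.mulVec x)| ^ p) μ :=
      (int_gp k).const_mul (p-1)
    have i2 : Integrable (fun x =>
        p * (Stmt6Aux.sp (p-1) (u₀ x ((η k)⁻¹ • R.mulVec x)) * u k x)) μ :=
      (int_spu k).const_mul p
    have he : ∫ x, D k x ∂μ = ∫ x, ((|u k x| ^ p
        + (p-1) * |u₀ x ((η k)⁻¹ • R.mulVec x)| ^ p)
        - p * (Stmt6Aux.sp (p-1) (u₀ x ((η k)⁻¹ • R.mulVec x)) * u k x)) ∂μ := by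
      rw [hDexp k]
    rw [he, integral_sub i1 i2, integral_add (huLp k) i1a, integral_const_mul,
      integral_const_mul]
    have hsw : ∫ x, Stmt6Aux.sp (p-1) (u₀ x ((η k)⁻¹ • R.mulVec x)) * u k x ∂μ
        = ∫ x, u k x * φ x ((η k)⁻¹ • R.mulVec x) ∂μ :=
      integral_congr_ae (Eventually.of_forall fun x => mul_comm _ _)
    rw [hsw]
  have hDlim : Tendsto (fun k => ∫ x, D k x ∂μ) atTop (𝓝 0) := by
    have heq : (fun k => ∫ x, D k x ∂μ) = fun k => ((∫ x, |u k x| ^ p ∂μ)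
        + (p-1) * (∫ x, |u₀ x ((η k)⁻¹ • R.mulVec x)| ^ p ∂μ))
        - p * (∫ x, u k x * φ x ((η k)⁻¹ • R.mulVec x) ∂μ) := funext fun k => hiD k
    rw [heq]
    have hcomb := (hnorm.add (hnorm'.const_mul (p-1))).sub (hT.const_mul p)
    convert hcomb using 2
    ring
  have hDnn : ∀ k x, 0 ≤ D k x := fun k x => Stmt6Aux.Dfun_nonneg hp _ _
  have hDsm : ∀ k, AEStronglyMeasurable (D k) μ := by
    intro k
    show AEStronglyMeasurable (fun x => Stmt6Aux.Dfun p (u k x)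
      (u₀ x ((η k)⁻¹ • R.mulVec x))) μ
    have hcm : Continuous fun z : ℝ × ℝ => Stmt6Aux.Dfun p z.1 z.2 := Stmt6Aux.Dfun_cont hp
    have hpm : AEMeasurable (fun x => (u k x, u₀ x ((η k)⁻¹ • R.mulVec x))) μ :=
      (hu k).prodMk (hgmeas k)
    exact (hcm.measurable.comp_aemeasurable hpm).aestronglyMeasurable
  -- pass to subsequences
  apply tendsto_of_subseq_tendsto
  intro ns hns
  have hD1 : Tendsto (fun j => ∫ x, D (ns j) x ∂μ) atTop (𝓝 0) := hDlim.comp hns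
  have heN : ∀ k, eLpNorm (D k - 0) 1 μ = ENNReal.ofReal (∫ x, D k x ∂μ) := by
    intro k
    rw [sub_zero, eLpNorm_one_eq_lintegral_enorm,
      ofReal_integral_eq_lintegral_ofReal (int_D k) (Eventually.of_forall (hDnn k))]
    exact lintegral_congr fun x => Real.enorm_eq_ofReal (hDnn k x)
  have heLp : Tendsto (fun j => eLpNorm (D (ns j) - 0) 1 μ) atTop (𝓝 0) := by
    have he2 : (fun j => eLpNorm (D (ns j) - 0) 1 μ)
        = fun j => ENNReal.ofReal (∫ x, D (ns j) x ∂μ) := funext fun j => heN (ns j)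
    rw [he2]
    have := ENNReal.tendsto_ofReal hD1
    simpa using this
  have hTIM : TendstoInMeasure μ (fun j => D (ns j)) atTop 0 :=
    tendstoInMeasure_of_tendsto_eLpNorm one_ne_zero (fun j => hDsm (ns j))
      aestronglyMeasurable_const heLp
  obtain ⟨ms, hms, haeD⟩ := hTIM.exists_seq_tendsto_ae
  refine ⟨ms, ?_⟩
  have hks : Tendsto (ns ∘ ms) atTop atTop := hns.comp hms.tendsto_atTop
  have haeV : ∀ᵐ x ∂μ, Tendsto (fun i => u (ns (ms i)) x
      - u₀ x ((η (ns (ms i)))⁻¹ • R.mulVec x)) atTop (𝓝 0) := by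
    filter_upwards [haeD] with x hx
    refine Stmt6Aux.tendsto_sub_of_Dfun hp (hΦ0 x) _ _
      (fun i => hgb (ns (ms i)) x) ?_
    simpa using hx
  exact Stmt6Aux.BL hp Φ hΦ0 hu₀Lp (fun i => u (ns (ms i)))
    (fun i x => u₀ x ((η (ns (ms i)))⁻¹ • R.mulVec x))
    (fun i => hu _) (fun i => hgmeas _) (fun i => huLp _) (fun i x => hgb _ x)
    haeV (hnorm.comp hks) (hnorm'.comp hks)
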